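/- Let T be a finitary monad on Set whose finitely generated algebras are closed under finite products — equivalently, such that for every finite set X the T-algebra (TX)^X is finitely generated. If A and B are T-algebras admitting surjective T-algebra morphisms from free algebras TX, TY on finite sets, then A × B admits a surjective T-algebra morphism from a free algebra TK on some finite set K. -/

import Mathlib

/-- A monad on Set, given concretely. -/
structure SetMonad where
  T : Type → Type
  map : ∀ {X Y : Type}, (X → Y) → T X → T Y
  η : ∀ {X : Type}, X → T X
  μ : ∀ {X : Type}, T (T X) → T X
  map_id : ∀ {X : Type} (t : T X), map id t = t
  map_comp : ∀ {X Y Z : Type} (f : X → Y) (g : Y → Z) (t : T X),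
    map (g ∘ f) t = map g (map f t)
  η_nat : ∀ {X Y : Type} (f : X → Y) (x : X), map f (η x) = η (f x)
  μ_nat : ∀ {X Y : Type} (f : X → Y) (t : T (T X)), map f (μ t) = μ (map (map f) t)
  μ_η : ∀ {X : Type} (t : T X), μ (η t) = t
  μ_map_η : ∀ {X : Type} (t : T X), μ (map η t) = t
  μ_assoc : ∀ {X : Type} (t : T (T (T X))), μ (map μ t) = μ (μ t)

/-- a : T A → A is a T-algebra structure. -/
def SetMonad.IsAlg (S : SetMonad) {A : Type} (a : S.T A → A) : Prop :=
  (∀ x : A, a (S.η x) = x) ∧ ∀ t : S.T (S.T A), a (S.μ t) = a (S.map a t)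

/-- f is a T-algebra morphism from (A,a) to (B,b). -/
def SetMonad.IsAlgHom (S : SetMonad) {A B : Type}
    (a : S.T A → A) (b : S.T B → B) (f : A → B) : Prop :=
  ∀ t : S.T A, f (a t) = b (S.map f t)

/-- (A,a) is a finitely generated T-algebra: there is a surjective T-algebra
    morphism from a free algebra on a finite set. -/
def SetMonad.FinGen (S : SetMonad) {A : Type} (a : S.T A → A) : Prop :=
  ∃ (k : ℕ) (q : S.T (Fin k) → A),
    S.IsAlgHom S.μ a q ∧ Function.Surjective q

/-- The product T-algebra structure on A × B. -/
def SetMonad.prodAlg (S : SetMonad) {A B : Type}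
    (a : S.T A → A) (b : S.T B → B) : S.T (A × B) → A × B :=
  fun t => (a (S.map Prod.fst t), b (S.map Prod.snd t))

/-- The power T-algebra (T X)^X for X = Fin k: the product of |X| copies of the
    free algebra T X. -/
def SetMonad.powAlg (S : SetMonad) (k : ℕ) :
    S.T (Fin k → S.T (Fin k)) → (Fin k → S.T (Fin k)) :=
  fun t i => S.μ (S.map (fun g => g i) t)

/-- If for every finite set X the T-algebra (T X)^X is finitely generated, then
    finitely generated T-algebras are closed under binary products: whenever A
    and B admit surjective T-algebra morphisms from free algebras on finite
    sets, so does A × B. -/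
lemma SetMonad.isAlgHom_comp (S : SetMonad) {A B C : Type}
    {a : S.T A → A} {b : S.T B → B} {c : S.T C → C} {f : A → B} {g : B → C}
    (hf : S.IsAlgHom a b f) (hg : S.IsAlgHom b c g) :
    S.IsAlgHom a c (fun x => g (f x)) := by
  intro t
  have : (fun x => g (f x)) = g ∘ f := rfl
  rw [this, S.map_comp]
  calc g (f (a t)) = g (b (S.map f t)) := by rw [hf]
    _ = c (S.map g (S.map f t)) := hg _

lemma SetMonad.eval_isAlgHom (S : SetMonad) (k : ℕ) (i : Fin k) :
    S.IsAlgHom (S.powAlg k) S.μ (fun h => h i) := fun _ => rfl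

lemma SetMonad.kleisli_isAlgHom (S : SetMonad) {X Y : Type} (f : X → S.T Y) :
    S.IsAlgHom S.μ S.μ (fun u => S.μ (S.map f u)) := by
  intro t
  show S.μ (S.map f (S.μ t)) = S.μ (S.map (fun u => S.μ (S.map f u)) t)
  rw [S.μ_nat, ← S.μ_assoc, ← S.map_comp]
  rfl

lemma SetMonad.pair_isAlgHom (S : SetMonad) {C A B : Type}
    {c : S.T C → C} {a : S.T A → A} {b : S.T B → B} {f : C → A} {g : C → B}
    (hf : S.IsAlgHom c a f) (hg : S.IsAlgHom c b g) :
    S.IsAlgHom c (S.prodAlg a b) (fun x => (f x, g x)) := by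
  intro t
  show (f (c t), g (c t)) = S.prodAlg a b (S.map (fun x => (f x, g x)) t)
  unfold SetMonad.prodAlg
  rw [hf, hg, ← S.map_comp, ← S.map_comp]
  rfl
theorem finGen_closed_under_products (S : SetMonad)
    (hpow : ∀ k : ℕ, S.FinGen (S.powAlg k))
    {A B : Type} (a : S.T A → A) (b : S.T B → B)
    (ha : S.IsAlg a) (hb : S.IsAlg b)
    (hA : S.FinGen a) (hB : S.FinGen b) :
    S.FinGen (S.prodAlg a b) := by
  obtain ⟨m, qA, hqA, hsA⟩ := hA
  obtain ⟨n, qB, hqB, hsB⟩ := hB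
  rcases isEmpty_or_nonempty A with hEA | hNA
  · refine ⟨m, fun t => (hEA.false (qA t)).elim, ?_, ?_⟩
    · intro t; exact (hEA.false (qA (S.μ t))).elim
    · intro p; exact (hEA.false p.1).elim
  rcases isEmpty_or_nonempty B with hEB | hNB
  · refine ⟨n, fun t => (hEB.false (qB t)).elim, ?_, ?_⟩
    · intro t; exact (hEB.false (qB (S.μ t))).elim
    · intro p; exact (hEB.false p.2).elim
  obtain ⟨t0⟩ : Nonempty (S.T (Fin m)) := by
    obtain ⟨x⟩ := hNA; obtain ⟨t, _⟩ := hsA x; exact ⟨t⟩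
  obtain ⟨s0⟩ : Nonempty (S.T (Fin n)) := by
    obtain ⟨y⟩ := hNB; obtain ⟨s, _⟩ := hsB y; exact ⟨s⟩
  set K := m + n + 2 with hK
  let i0 : Fin K := ⟨0, by omega⟩
  let i1 : Fin K := ⟨1, by omega⟩
  let α : Fin K → S.T (Fin m) := fun z => if h : z.val < m then S.η ⟨z.val, h⟩ else t0
  let β : Fin K → S.T (Fin n) := fun z => if h : z.val < n then S.η ⟨z.val, h⟩ else s0
  let fA : (Fin K → S.T (Fin K)) → A := fun h => qA (S.μ (S.map α (h i0)))
  let fB : (Fin K → S.T (Fin K)) → B := fun h => qB (S.μ (S.map β (h i1)))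
  have kA : S.IsAlgHom S.μ S.μ (fun u : S.T (Fin K) => S.μ (S.map α u)) :=
    S.kleisli_isAlgHom α
  have kB : S.IsAlgHom S.μ S.μ (fun u : S.T (Fin K) => S.μ (S.map β u)) :=
    S.kleisli_isAlgHom β
  have cA : S.IsAlgHom (S.powAlg K) S.μ (fun h : Fin K → S.T (Fin K) => S.μ (S.map α (h i0))) :=
    S.isAlgHom_comp (f := fun (h : Fin K → S.T (Fin K)) => h i0) (g := fun u => S.μ (S.map α u)) (S.eval_isAlgHom K i0) kA
  have cB : S.IsAlgHom (S.powAlg K) S.μ (fun h : Fin K → S.T (Fin K) => S.μ (S.map β (h i1))) :=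
    S.isAlgHom_comp (f := fun (h : Fin K → S.T (Fin K)) => h i1) (g := fun u => S.μ (S.map β u)) (S.eval_isAlgHom K i1) kB
  have hfA : S.IsAlgHom (S.powAlg K) a fA := S.isAlgHom_comp (g := qA) cA hqA
  have hfB : S.IsAlgHom (S.powAlg K) b fB := S.isAlgHom_comp (g := qB) cB hqB
  have hΦ : S.IsAlgHom (S.powAlg K) (S.prodAlg a b) (fun h => (fA h, fB h)) :=
    S.pair_isAlgHom hfA hfB
  have hΦs : Function.Surjective (fun h => (fA h, fB h)) := by
    rintro ⟨x, y⟩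
    obtain ⟨t, rfl⟩ := hsA x
    obtain ⟨s, rfl⟩ := hsB y
    refine ⟨fun i => if i = i0 then S.map (fun j : Fin m => (⟨j.val, by omega⟩ : Fin K)) t
      else S.map (fun j : Fin n => (⟨j.val, by omega⟩ : Fin K)) s, ?_⟩
    have hi01 : i1 ≠ i0 := by simp [i0, i1, Fin.ext_iff]
    have h1 : S.μ (S.map α (S.map (fun j : Fin m => (⟨j.val, by omega⟩ : Fin K)) t)) = t := by
      rw [← S.map_comp]
      have : (α ∘ fun j : Fin m => (⟨j.val, by omega⟩ : Fin K)) = S.η := by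
        funext j
        simp only [Function.comp_apply, α]
        rw [dif_pos j.isLt]
      rw [this, S.μ_map_η]
    have h2 : S.μ (S.map β (S.map (fun j : Fin n => (⟨j.val, by omega⟩ : Fin K)) s)) = s := by
      rw [← S.map_comp]
      have : (β ∘ fun j : Fin n => (⟨j.val, by omega⟩ : Fin K)) = S.η := by
        funext j
        simp only [Function.comp_apply, β]
        rw [dif_pos j.isLt]
      rw [this, S.μ_map_η]
    simp only [fA, fB, if_pos rfl, if_neg hi01, if_true, h1, h2]
  obtain ⟨N, p, hp, hps⟩ := hpow K
  exact ⟨N, fun u => (fA (p u), fB (p u)), S.isAlgHom_comp hp hΦ, hΦs.comp hps⟩
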